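/- Let n be even and let q ∈ B_n be a non-zero linear function, q(x) = w·x with w ≠ 0. Then f ∈ B_n is q-bent if and only if f is bent. -/

import Mathlib

open Finset Matrix

/-- Hamming weight of a Boolean function on `𝔽₂ⁿ`. -/
def wt {n : ℕ} (f : (Fin n → ZMod 2) → ZMod 2) : ℕ :=
  (Finset.univ.filter fun a => f a = 1).card

/-- Imbalance `I_f = Σ_a (-1)^{f(a)}`. -/
def imb {n : ℕ} (f : (Fin n → ZMod 2) → ZMod 2) : ℤ :=
  ∑ a : Fin n → ZMod 2, (-1 : ℤ) ^ (f a).val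

/-- q-transform coefficient `W_q(f)(A) = Σ_a (-1)^{f(a)+q(aA)}` (for `A` a matrix;
invertibility is imposed at use sites via `GL`). -/
def Wq {n : ℕ} (q f : (Fin n → ZMod 2) → ZMod 2)
    (A : Matrix (Fin n) (Fin n) (ZMod 2)) : ℤ :=
  ∑ a : Fin n → ZMod 2, (-1 : ℤ) ^ (f a + q (Matrix.vecMul a A)).val

/-- `ρ_q = ⌈ ((2^{2n} - I_q²)/(2^n - 1))^{1/2} ⌉`. -/
noncomputable def rho {n : ℕ} (q : (Fin n → ZMod 2) → ZMod 2) : ℤ :=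
  ⌈Real.sqrt (((2 : ℝ) ^ (2 * n) - (imb q : ℝ) ^ 2) / ((2 : ℝ) ^ n - 1))⌉

/-- `f` is affine: `f(x) = v·x + c`. -/
def IsAffine {n : ℕ} (f : (Fin n → ZMod 2) → ZMod 2) : Prop :=
  ∃ (v : Fin n → ZMod 2) (c : ZMod 2), ∀ x, f x = (∑ i, v i * x i) + c

/-- Over a field, a linear automorphism can send any nonzero vector to any nonzero vector. -/
lemma exists_linearEquiv_map {K V : Type*} [Field K] [AddCommGroup V] [Module K V]
    [FiniteDimensional K V] (w v : V) (hw : w ≠ 0) (hv : v ≠ 0) :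
    ∃ L : V ≃ₗ[K] V, L w = v := by
  have hw' : LinearIndepOn K id ({w} : Set V) :=
    (linearIndependent_unique_iff).mpr (by simpa using hw)
  have hv' : LinearIndepOn K id ({v} : Set V) :=
    (linearIndependent_unique_iff).mpr (by simpa using hv)
  classical
  let b₁ := Module.Basis.extend hw'
  let b₂ := Module.Basis.extend hv'
  haveI : Fintype (hw'.extend (Set.subset_univ _)) :=
    FiniteDimensional.fintypeBasisIndex b₁
  haveI : Fintype (hv'.extend (Set.subset_univ _)) :=
    FiniteDimensional.fintypeBasisIndex b₂
  have hcard : Fintype.card (hw'.extend (Set.subset_univ _)) =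
      Fintype.card (hv'.extend (Set.subset_univ _)) := by
    rw [← Module.finrank_eq_card_basis b₁, ← Module.finrank_eq_card_basis b₂]
  obtain ⟨e⟩ := Fintype.card_eq.mp hcard
  have hwmem : w ∈ hw'.extend (Set.subset_univ _) :=
    hw'.subset_extend _ (Set.mem_singleton w)
  have hvmem : v ∈ hv'.extend (Set.subset_univ _) :=
    hv'.subset_extend _ (Set.mem_singleton v)
  refine ⟨b₁.equiv b₂ (e.trans (Equiv.swap (e ⟨w, hwmem⟩) ⟨v, hvmem⟩)), ?_⟩
  have h1 : b₁ ⟨w, hwmem⟩ = w := Module.Basis.extend_apply_self hw' ⟨w, hwmem⟩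
  have h2 : b₂ ⟨v, hvmem⟩ = v := Module.Basis.extend_apply_self hv' ⟨v, hvmem⟩
  calc (b₁.equiv b₂ _) w = (b₁.equiv b₂ _) (b₁ ⟨w, hwmem⟩) := by rw [h1]
    _ = b₂ ((Equiv.swap (e ⟨w, hwmem⟩) ⟨v, hvmem⟩) (e ⟨w, hwmem⟩)) := by
        rw [Module.Basis.equiv_apply]; rfl
    _ = v := by rw [Equiv.swap_apply_left, h2]

lemma dot_vecMul_eq {n : ℕ} (w a : Fin n → ZMod 2) (A : Matrix (Fin n) (Fin n) (ZMod 2)) :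
    (∑ i, w i * Matrix.vecMul a A i) = ∑ i, (A *ᵥ w) i * a i := by
  simp only [Matrix.vecMul, Matrix.mulVec, dotProduct, Finset.mul_sum, Finset.sum_mul]
  rw [Finset.sum_comm]
  apply Finset.sum_congr rfl
  intro i _
  apply Finset.sum_congr rfl
  intro j _
  ring

/-- For nonzero linear `q(x) = w·x` (and `n` even), `f` is `q`-bent iff `f` is bent. -/
theorem qbent_iff_bent (n : ℕ) (hne : Even n)
    (w : Fin n → ZMod 2) (hw : w ≠ 0) (f : (Fin n → ZMod 2) → ZMod 2) :
    ((∀ A : GL (Fin n) (ZMod 2),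
        |Wq (fun x => ∑ i, w i * x i) f A.val| = 2 ^ (n / 2)) ∧
      |imb f| = 2 ^ (n / 2)) ↔
    (∀ v : Fin n → ZMod 2,
        |∑ a : Fin n → ZMod 2, (-1 : ℤ) ^ (f a + ∑ i, v i * a i).val| = 2 ^ (n / 2)) := by
  have key : ∀ A : Matrix (Fin n) (Fin n) (ZMod 2),
      Wq (fun x => ∑ i, w i * x i) f A =
      ∑ a : Fin n → ZMod 2, (-1 : ℤ) ^ (f a + ∑ i, (A *ᵥ w) i * a i).val := by
    intro A
    unfold Wq
    apply Finset.sum_congr rfl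
    intro a _
    rw [show (fun x => ∑ i, w i * x i) (Matrix.vecMul a A) = ∑ i, w i * Matrix.vecMul a A i
      from rfl, dot_vecMul_eq]
  constructor
  · rintro ⟨h1, h2⟩ v
    by_cases hv : v = 0
    · subst hv
      simpa [imb] using h2
    · obtain ⟨L, hL⟩ := exists_linearEquiv_map (K := ZMod 2) w v hw hv
      let A : GL (Fin n) (ZMod 2) :=
        (Matrix.GeneralLinearGroup.toLin (n := Fin n) (R := ZMod 2)).symm
          (LinearMap.GeneralLinearGroup.ofLinearEquiv L)
      have hA : (A.val : Matrix (Fin n) (Fin n) (ZMod 2)) *ᵥ w = v := by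
        have : Matrix.mulVecLin (A.val : Matrix (Fin n) (Fin n) (ZMod 2)) w = v := by
          rw [← Matrix.GeneralLinearGroup.coe_toLin]
          show ((Matrix.GeneralLinearGroup.toLin A :
            LinearMap.GeneralLinearGroup (ZMod 2) (Fin n → ZMod 2)) :
            (Fin n → ZMod 2) →ₗ[ZMod 2] (Fin n → ZMod 2)) w = v
          rw [MulEquiv.apply_symm_apply]
          exact hL
        simpa [Matrix.mulVecLin] using this
      have := h1 A
      rw [key, hA] at this
      exact this
  · intro h
    refine ⟨fun A => ?_, ?_⟩
    · rw [key]
      exact h (A.val *ᵥ w)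
    · simpa [imb] using h 0
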